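/- The binary operation T on [0,1] defined by T(x,y) = xy if x,y ∈ [0,1/4); T(x,y) = 1 if x,y ∈ [1/4,1]; and T(x,y) = min{x,y} otherwise, is associative. -/
import Mathlib


open Set ENNReal

/-- Pseudo-inverse of `f : [0,1] → [0,∞]`: `f⁻(y) = sup {x ∈ [0,1] | f x < y}` (with `sup ∅ = 0`). -/
noncomputable def pinv (f : unitInterval → ℝ≥0∞) (y : ℝ≥0∞) : unitInterval :=
  ⟨sSup {x : ℝ | ∃ hx : x ∈ unitInterval, f ⟨x, hx⟩ < y}, by
    set A : Set ℝ := {x : ℝ | ∃ hx : x ∈ unitInterval, f ⟨x, hx⟩ < y} with hA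
    have hsub : A ⊆ Set.Icc (0:ℝ) 1 := fun x hx => hx.choose
    rcases A.eq_empty_or_nonempty with h | h
    · rw [h, Real.sSup_empty]; exact ⟨le_refl 0, zero_le_one⟩
    · obtain ⟨a, ha⟩ := h
      exact ⟨le_trans (hsub ha).1 (le_csSup ⟨1, fun z hz => (hsub hz).2⟩ ha),
        csSup_le ⟨a, ha⟩ fun z hz => (hsub hz).2⟩⟩

/-- `G_M(x) = max (M ∩ {sup([0,x]∩M), inf([x,∞]∩M)})`. -/
noncomputable def GM (M : Set ℝ≥0∞) (x : ℝ≥0∞) : ℝ≥0∞ :=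
  sSup (M ∩ {sSup (M ∩ Set.Iic x), sInf (M ∩ Set.Ici x)})

/-- Right limit `f(x⁺)`, with convention `f(1⁺) = ∞`. -/
noncomputable def rlim (f : unitInterval → ℝ≥0∞) (x : unitInterval) : ℝ≥0∞ :=
  if (x : ℝ) = 1 then ⊤ else sInf {z | ∃ t : unitInterval, x < t ∧ f t = z}

/-- The defining condition of the class `𝓕`. -/
def ClassF (f : unitInterval → ℝ≥0∞) : Prop :=
  ∀ x : unitInterval,
    (rlim f x ∈ Set.range f → f x = rlim f x) ∧
    (rlim f x ∉ Set.range f → ∀ y : unitInterval, y ≠ x → f y ≠ f x)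

theorem stmt13 (T : ℝ → ℝ → ℝ)
    (hT : ∀ x y : ℝ, T x y =
      if x < 1/4 ∧ y < 1/4 then x * y
      else if 1/4 ≤ x ∧ 1/4 ≤ y then 1
      else min x y) :
    ∀ x ∈ Set.Icc (0:ℝ) 1, ∀ y ∈ Set.Icc (0:ℝ) 1, ∀ z ∈ Set.Icc (0:ℝ) 1,
      T (T x y) z = T x (T y z) := by
  have Ta : ∀ a b : ℝ, a < 1/4 → b < 1/4 → T a b = a * b := by
    intro a b ha hb; rw [hT, if_pos ⟨ha, hb⟩]
  have Tb : ∀ a b : ℝ, a < 1/4 → 1/4 ≤ b → T a b = a := by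
    intro a b ha hb
    rw [hT, if_neg (by rintro ⟨-, h⟩; linarith), if_neg (by rintro ⟨h, -⟩; linarith)]
    exact min_eq_left (ha.le.trans hb)
  have Tc : ∀ a b : ℝ, 1/4 ≤ a → b < 1/4 → T a b = b := by
    intro a b ha hb
    rw [hT, if_neg (by rintro ⟨h, -⟩; linarith), if_neg (by rintro ⟨-, h⟩; linarith)]
    exact min_eq_right (hb.le.trans ha)
  have Td : ∀ a b : ℝ, 1/4 ≤ a → 1/4 ≤ b → T a b = 1 := by
    intro a b ha hb; rw [hT, if_neg (by rintro ⟨h, -⟩; linarith), if_pos ⟨ha, hb⟩]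
  rintro x ⟨hx0, hx1⟩ y ⟨hy0, hy1⟩ z ⟨hz0, hz1⟩
  rcases lt_or_ge x (1/4) with hx | hx <;>
  rcases lt_or_ge y (1/4) with hy | hy <;>
  rcases lt_or_ge z (1/4) with hz | hz
  · have hxy : x * y < 1/4 := lt_of_le_of_lt (by nlinarith) hx
    have hyz : y * z < 1/4 := lt_of_le_of_lt (by nlinarith) hy
    rw [Ta x y hx hy, Ta y z hy hz, Ta _ z hxy hz, Ta x _ hx hyz]; ring
  · have hxy : x * y < 1/4 := lt_of_le_of_lt (by nlinarith) hx
    rw [Tb y z hy hz, Ta x y hx hy, Tb (x*y) z hxy hz]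
  · rw [Tb x y hx hy, Tc y z hy hz]
  · rw [Tb x y hx hy, Td y z hy hz, Tb x z hx hz, Tb x 1 hx (by norm_num)]
  · have hyz : y * z < 1/4 := lt_of_le_of_lt (by nlinarith) hy
    rw [Tc x y hx hy, Ta y z hy hz, Tc x (y*z) hx hyz]
  · rw [Tc x y hx hy, Tb y z hy hz, Tc x y hx hy]
  · rw [Td x y hx hy, Tc y z hy hz, Tc 1 z (by norm_num) hz, Tc x z hx hz]
  · rw [Td x y hx hy, Td y z hy hz, Td 1 z (by norm_num) hz, Td x 1 hx (by norm_num)]
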